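/- Let $p$ be a prime, $q = p^m$ with $m \geq 1$, and let $K$ be an algebraically closed field of characteristic $p$. The set $\{(a, b) \in K^2 : a^{q+1} = 1 \text{ and } a \cdot b^q + a^q \cdot b = 0\}$ has exactly $q^2 + q$ elements. -/

import Mathlib

open Polynomial Finset

theorem stmt_13 (p m q : ℕ) (hp : p.Prime) (hm : 1 ≤ m) (hq : q = p ^ m)
    (K : Type*) [Field K] [IsAlgClosed K] (hchar : CharP K p) :
    {x : K × K | x.1 ^ (q + 1) = 1 ∧ x.1 * x.2 ^ q + x.1 ^ q * x.2 = 0}.ncard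
      = q ^ 2 + q := by
  classical
  have hq2 : 2 ≤ q := by
    subst hq
    calc 2 ≤ p := hp.two_le
    _ ≤ p ^ m := Nat.le_self_pow (by omega) p
  have hqK : (q : K) = 0 := by
    subst hq
    push_cast
    rw [CharP.cast_eq_zero K p]
    exact zero_pow (by omega)
  have hq1K : ((q : K) + 1) ≠ 0 := by rw [hqK]; simp
  -- first polynomial
  set f : K[X] := X ^ (q + 1) - C 1 with hf
  have hfsep : f.Separable := separable_X_pow_sub_C 1 (by push_cast; exact hq1K) one_ne_zero
  have hfdeg : f.natDegree = q + 1 := natDegree_X_pow_sub_C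
  have hfne : f ≠ 0 := fun h => by simp [h] at hfdeg
  have hfcard : f.roots.toFinset.card = q + 1 := by
    rw [Multiset.toFinset_card_of_nodup (nodup_roots hfsep),
      splits_iff_card_roots.mp (IsAlgClosed.splits f), hfdeg]
  set A : Finset K := f.roots.toFinset with hA
  -- second family
  set g : K → K[X] := fun a => X ^ q + C (a ^ (q - 1)) * X with hg
  have hgdeg : ∀ a : K, (g a).natDegree = q := by
    intro a
    rw [hg, natDegree_add_eq_left_of_natDegree_lt]
    · exact natDegree_X_pow q
    · rw [natDegree_X_pow]
      calc (C (a ^ (q - 1)) * X).natDegree ≤ 1 := natDegree_C_mul_le _ _ |>.trans (by simp)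
      _ < q := by omega
  have key : ∀ a : K, a ≠ 0 → (g a).roots.toFinset.card = q := by
    intro a ha
    have hane : a ^ (q - 1) ≠ 0 := pow_ne_zero _ ha
    have hder : (g a).derivative = C (a ^ (q - 1)) := by
      rw [hg]
      simp only [derivative_add, derivative_X_pow, derivative_C_mul, derivative_X,
        mul_one, hqK, map_zero, zero_mul, zero_add]
    have hsep : (g a).Separable := by
      rw [Polynomial.Separable, hder]
      exact ⟨0, C (a ^ (q - 1))⁻¹, by
        rw [zero_mul, zero_add, ← C_mul, inv_mul_cancel₀ hane, C_1]⟩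
    rw [Multiset.toFinset_card_of_nodup (nodup_roots hsep),
      splits_iff_card_roots.mp (IsAlgClosed.splits (g a)), hgdeg]
  set T : Finset (K × K) := A.biUnion (fun a => {a} ×ˢ (g a).roots.toFinset) with hT
  have hAmem : ∀ a : K, a ∈ A ↔ a ^ (q + 1) = 1 := by
    intro a
    rw [hA, Multiset.mem_toFinset, mem_roots hfne]
    simp [hf, IsRoot, sub_eq_zero]
  have hAne : ∀ a ∈ A, a ≠ 0 := by
    intro a ha h0
    rw [hAmem] at ha
    rw [h0, zero_pow (by omega)] at ha
    exact zero_ne_one ha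
  have hgne : ∀ a : K, g a ≠ 0 := fun a h => by
    have := hgdeg a; rw [h] at this; simp at this; omega
  have hSeq : {x : K × K | x.1 ^ (q + 1) = 1 ∧ x.1 * x.2 ^ q + x.1 ^ q * x.2 = 0} = ↑T := by
    ext ⟨a, b⟩
    simp only [Set.mem_setOf_eq, hT, coe_biUnion, Set.mem_iUnion, coe_product, coe_singleton,
      Set.mem_prod, Set.mem_singleton_iff, Finset.mem_coe, Multiset.mem_toFinset]
    constructor
    · rintro ⟨h1, h2⟩
      refine ⟨a, (hAmem a).mpr h1, rfl, ?_⟩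
      rw [mem_roots (hgne a)]
      have ha : a ≠ 0 := hAne a ((hAmem a).mpr h1)
      have : a * (b ^ q + a ^ (q - 1) * b) = 0 := by
        rw [mul_add, ← mul_assoc, mul_comm a (a ^ (q - 1)), ← pow_succ]
        have : q - 1 + 1 = q := by omega
        rw [this]; exact h2
      have h3 : b ^ q + a ^ (q - 1) * b = 0 := by
        rcases mul_eq_zero.mp this with h | h
        · exact absurd h ha
        · exact h
      simpa [hg, IsRoot] using h3
    · rintro ⟨c, hc, heq, hb⟩
      cases heq
      rw [mem_roots (hgne a)] at hb
      have h1 := (hAmem a).mp hc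
      refine ⟨h1, ?_⟩
      have h3 : b ^ q + a ^ (q - 1) * b = 0 := by simpa [hg, IsRoot] using hb
      have : a * (b ^ q + a ^ (q - 1) * b) = 0 := by rw [h3, mul_zero]
      rw [mul_add, ← mul_assoc, mul_comm a (a ^ (q - 1)), ← pow_succ] at this
      have hq1 : q - 1 + 1 = q := by omega
      rwa [hq1] at this
  rw [hSeq, Set.ncard_coe_finset]
  have hdisj : (A : Set K).PairwiseDisjoint (fun a => {a} ×ˢ (g a).roots.toFinset) := by
    intro a _ a' _ hne
    simp only [Function.onFun]
    rw [Finset.disjoint_left]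
    rintro ⟨x, y⟩ hx hy
    simp only [Finset.mem_product, Finset.mem_singleton] at hx hy
    exact hne (hx.1.symm.trans hy.1)
  rw [Finset.card_biUnion hdisj]
  have : ∀ a ∈ A, ({a} ×ˢ (g a).roots.toFinset).card = q := by
    intro a ha
    rw [Finset.card_product, Finset.card_singleton, one_mul, key a (hAne a ha)]
  rw [Finset.sum_congr rfl this, Finset.sum_const, hfcard, smul_eq_mul]
  ring
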